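/- Let λ : ℕ → ℝ be a nondecreasing sequence with λ₀ > 0, let N ∈ ℕ satisfy λ_{N+1} > λ_N, let ε > 0 satisfy 1/ε ≥ 3·λ_{N+1} + λ_N, and let θ ∈ ℝ satisfy 2θ(εθ − 1) + λ_N + λ_{N+1} = 0. Let u, h : ℝ → ℓ²(ℕ,ℝ) be such that t ↦ e^{θt}·u(t) and t ↦ e^{θt}·h(t) belong to L²(ℝ; ℓ²), for each n ∈ ℕ the component u_n(t) := (u(t))_n is twice continuously differentiable with t ↦ e^{θt}u_n′(t) and t ↦ e^{θt}u_n″(t) in L²(ℝ), and for each n and all t ∈ ℝ, ε·u_n″(t) + u_n′(t) + λ_n·u_n(t) = (h(t))_n. Then (∫_ℝ e^{2θt}‖u(t)‖²_{ℓ²} dt)^{1/2} ≤ (2/(λ_{N+1} − λ_N))·(∫_ℝ e^{2θt}‖h(t)‖²_{ℓ²} dt)^{1/2}. -/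

import Mathlib

open MeasureTheory

lemma aux_mul_int {f g : ℝ → ℝ} (hf : Continuous f) (hg : Continuous g)
    (hf2 : Integrable (fun t => f t ^ 2)) (hg2 : Integrable (fun t => g t ^ 2)) :
    Integrable (fun t => f t * g t) := by
  refine Integrable.mono' (g := fun t => (f t ^ 2 + g t ^ 2) / 2) ((hf2.add hg2).div_const 2)
    ((hf.mul hg).aestronglyMeasurable) ?_
  refine Filter.Eventually.of_forall fun t => ?_
  rw [Real.norm_eq_abs, abs_mul]
  nlinarith [sq_nonneg (|f t| - |g t|), abs_nonneg (f t), abs_nonneg (g t),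
    sq_abs (f t), sq_abs (g t)]

lemma aux_int_self_deriv {v v1 : ℝ → ℝ} (hv : ∀ t, HasDerivAt v (v1 t) t)
    (hc1 : Continuous v1) (hvI : Integrable (fun t => v t ^ 2))
    (hv1I : Integrable (fun t => v1 t ^ 2)) : ∫ t : ℝ, v t * v1 t = 0 := by
  have hcv : Continuous v :=
    continuous_iff_continuousAt.mpr fun t => (hv t).continuousAt
  have hprod : Integrable (fun t => v t * v1 t) := aux_mul_int hcv hc1 hvI hv1I
  have hder : ∀ t : ℝ, HasDerivAt (fun s => v s ^ 2 / 2) (v t * v1 t) t := by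
    intro t
    have h0 := (((hv t).mul (hv t)).div_const 2).congr_deriv
      (show (v1 t * v t + v t * v1 t) / 2 = v t * v1 t by ring)
    have : (fun s => (v * v) s / 2) = fun s => v s ^ 2 / 2 := funext fun s => by simp only [Pi.mul_apply]; ring
    rwa [this] at h0
  exact integral_eq_zero_of_hasDerivAt_of_integrable hder hprod (hvI.div_const 2)

lemma aux_int_deriv2 {v v1 v2 : ℝ → ℝ} (hv : ∀ t, HasDerivAt v (v1 t) t)
    (hv1 : ∀ t, HasDerivAt v1 (v2 t) t) (hc2 : Continuous v2)
    (hvI : Integrable (fun t => v t ^ 2)) (hv1I : Integrable (fun t => v1 t ^ 2))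
    (hv2I : Integrable (fun t => v2 t ^ 2)) :
    ∫ t : ℝ, v t * v2 t = - ∫ t : ℝ, v1 t ^ 2 := by
  have hcv : Continuous v :=
    continuous_iff_continuousAt.mpr fun t => (hv t).continuousAt
  have hcv1 : Continuous v1 :=
    continuous_iff_continuousAt.mpr fun t => (hv1 t).continuousAt
  have hI02 : Integrable (fun t => v t * v2 t) := aux_mul_int hcv hc2 hvI hv2I
  have hI01 : Integrable (fun t => v t * v1 t) := aux_mul_int hcv hcv1 hvI hv1I
  have hder : ∀ t : ℝ, HasDerivAt (fun s => v s * v1 s) (v1 t ^ 2 + v t * v2 t) t :=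
    fun t => ((hv t).mul (hv1 t)).congr_deriv
      (show v1 t * v1 t + v t * v2 t = v1 t ^ 2 + v t * v2 t by ring)
  have h0 : ∫ t : ℝ, (v1 t ^ 2 + v t * v2 t) = 0 :=
    integral_eq_zero_of_hasDerivAt_of_integrable hder (hv1I.add hI02) hI01
  rw [integral_add hv1I hI02] at h0
  linarith

lemma key_scalar {K eps a b d : ℝ} (heps : 0 < eps)
    (hd : 2 * eps * d = 2 * eps * a - b ^ 2)
    (haK : K ≤ a ^ 2)
    (habK : b ^ 2 < 2 * eps * a → K ≤ a ^ 2 - d ^ 2)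
    {v v1 v2 : ℝ → ℝ}
    (hv : ∀ t, HasDerivAt v (v1 t) t) (hv1 : ∀ t, HasDerivAt v1 (v2 t) t)
    (hc2 : Continuous v2)
    (hvI : Integrable (fun t => v t ^ 2)) (hv1I : Integrable (fun t => v1 t ^ 2))
    (hv2I : Integrable (fun t => v2 t ^ 2)) :
    K * ∫ t : ℝ, v t ^ 2 ≤ ∫ t : ℝ, (eps * v2 t + b * v1 t + a * v t) ^ 2 := by
  have hcv : Continuous v :=
    continuous_iff_continuousAt.mpr fun t => (hv t).continuousAt
  have hcv1 : Continuous v1 :=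
    continuous_iff_continuousAt.mpr fun t => (hv1 t).continuousAt
  have hI01 : Integrable (fun t => v t * v1 t) := aux_mul_int hcv hcv1 hvI hv1I
  have hI02 : Integrable (fun t => v t * v2 t) := aux_mul_int hcv hc2 hvI hv2I
  have hI12 : Integrable (fun t => v1 t * v2 t) := aux_mul_int hcv1 hc2 hv1I hv2I
  set J0 := ∫ t : ℝ, v t ^ 2 with hJ0
  set J1 := ∫ t : ℝ, v1 t ^ 2 with hJ1
  set J2 := ∫ t : ℝ, v2 t ^ 2 with hJ2
  have hJ0n : 0 ≤ J0 := integral_nonneg fun t => sq_nonneg _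
  have hJ1n : 0 ≤ J1 := integral_nonneg fun t => sq_nonneg _
  have hJ2n : 0 ≤ J2 := integral_nonneg fun t => sq_nonneg _
  have P10 : ∫ t : ℝ, v t * v1 t = 0 := aux_int_self_deriv hv hcv1 hvI hv1I
  have P12 : ∫ t : ℝ, v1 t * v2 t = 0 := aux_int_self_deriv hv1 hc2 hv1I hv2I
  have P02 : ∫ t : ℝ, v t * v2 t = - J1 := aux_int_deriv2 hv hv1 hc2 hvI hv1I hv2I
  have i1 : Integrable (fun t : ℝ => eps ^ 2 * v2 t ^ 2) := hv2I.const_mul _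
  have i2 : Integrable (fun t : ℝ => b ^ 2 * v1 t ^ 2) := hv1I.const_mul _
  have i3 : Integrable (fun t : ℝ => a ^ 2 * v t ^ 2) := hvI.const_mul _
  have i4 : Integrable (fun t : ℝ => (2 * eps * b) * (v1 t * v2 t)) := hI12.const_mul _
  have i5 : Integrable (fun t : ℝ => (2 * eps * a) * (v t * v2 t)) := hI02.const_mul _
  have i6 : Integrable (fun t : ℝ => (2 * a * b) * (v t * v1 t)) := hI01.const_mul _
  have s5 : Integrable (fun t : ℝ => (2 * eps * a) * (v t * v2 t)
      + (2 * a * b) * (v t * v1 t)) := i5.add i6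
  have s4 : Integrable (fun t : ℝ => (2 * eps * b) * (v1 t * v2 t)
      + ((2 * eps * a) * (v t * v2 t) + (2 * a * b) * (v t * v1 t))) := i4.add s5
  have s3 : Integrable (fun t : ℝ => a ^ 2 * v t ^ 2 + ((2 * eps * b) * (v1 t * v2 t)
      + ((2 * eps * a) * (v t * v2 t) + (2 * a * b) * (v t * v1 t)))) := i3.add s4
  have s2 : Integrable (fun t : ℝ => b ^ 2 * v1 t ^ 2 + (a ^ 2 * v t ^ 2
      + ((2 * eps * b) * (v1 t * v2 t) + ((2 * eps * a) * (v t * v2 t)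
      + (2 * a * b) * (v t * v1 t))))) := i2.add s3
  have hexp : ∫ t : ℝ, (eps * v2 t + b * v1 t + a * v t) ^ 2
      = eps ^ 2 * J2 + b ^ 2 * J1 + a ^ 2 * J0
        + (2 * eps * b) * (∫ t : ℝ, v1 t * v2 t)
        + (2 * eps * a) * (∫ t : ℝ, v t * v2 t)
        + (2 * a * b) * (∫ t : ℝ, v t * v1 t) := by
    have hfe : (fun t : ℝ => (eps * v2 t + b * v1 t + a * v t) ^ 2)
        = fun t : ℝ => eps ^ 2 * v2 t ^ 2 + (b ^ 2 * v1 t ^ 2 + (a ^ 2 * v t ^ 2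
          + ((2 * eps * b) * (v1 t * v2 t) + ((2 * eps * a) * (v t * v2 t)
          + (2 * a * b) * (v t * v1 t))))) := funext fun t => by ring
    rw [hfe, integral_add i1 s2, integral_add i2 s3, integral_add i3 s4,
      integral_add i4 s5, integral_add i5 i6, integral_const_mul, integral_const_mul,
      integral_const_mul, integral_const_mul, integral_const_mul, integral_const_mul]
    ring
  rw [hexp, P10, P12, P02]
  rcases le_or_gt (2 * eps * a) (b ^ 2) with hcase | hcase
  · nlinarith [sq_nonneg eps, sq_nonneg b]
  · have hKd := habK hcase
    have hle : (2 * eps * a - b ^ 2) * J1 ≤ d ^ 2 * J0 + eps ^ 2 * J2 := by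
      have h1 : (2 * eps * a - b ^ 2) * J1 = ∫ t : ℝ, (-(2 * eps * d)) * (v t * v2 t) := by
        rw [integral_const_mul, P02, hd]; ring
      have h2 : ∫ t : ℝ, (d ^ 2 * v t ^ 2 + eps ^ 2 * v2 t ^ 2)
          = d ^ 2 * J0 + eps ^ 2 * J2 := by
        rw [integral_add ((hvI.const_mul _ : Integrable (fun t : ℝ => d ^ 2 * v t ^ 2) volume))
          ((hv2I.const_mul _ : Integrable (fun t : ℝ => eps ^ 2 * v2 t ^ 2) volume)),
          integral_const_mul, integral_const_mul]
      rw [h1, ← h2]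
      refine integral_mono (hI02.const_mul _)
        (((hvI.const_mul _ : Integrable (fun t : ℝ => d ^ 2 * v t ^ 2) volume)).add
          ((hv2I.const_mul _ : Integrable (fun t : ℝ => eps ^ 2 * v2 t ^ 2) volume)))
        fun t => ?_
      simp only
      nlinarith [sq_nonneg (d * v t + eps * v2 t)]
    nlinarith [hle]

lemma tri2 (p q : ℝ) : (p + q) ^ 2 ≤ 2 * p ^ 2 + 2 * q ^ 2 := by
  nlinarith [sq_nonneg (p - q)]

lemma tri3 (p q r : ℝ) : (p + q + r) ^ 2 ≤ 3 * p ^ 2 + 3 * q ^ 2 + 3 * r ^ 2 := by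
  nlinarith [sq_nonneg (p - q), sq_nonneg (q - r), sq_nonneg (p - r)]

lemma per_component {K eps theta lamn a b d : ℝ} (heps : 0 < eps)
    (ha : a = lamn + eps * theta ^ 2 - theta) (hb : b = 1 - 2 * eps * theta)
    (hd : 2 * eps * d = 2 * eps * a - b ^ 2)
    (haK : K ≤ a ^ 2)
    (habK : b ^ 2 < 2 * eps * a → K ≤ a ^ 2 - d ^ 2)
    {f w : ℝ → ℝ} (hf : ContDiff ℝ 2 f)
    (hfI : Integrable (fun t => (Real.exp (theta * t) * f t) ^ 2))
    (hf'I : Integrable (fun t => (Real.exp (theta * t) * deriv f t) ^ 2))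
    (hf''I : Integrable (fun t => (Real.exp (theta * t) * deriv (deriv f) t) ^ 2))
    (hode : ∀ t, eps * deriv (deriv f) t + deriv f t + lamn * f t = w t) :
    K * ∫ t : ℝ, (Real.exp (theta * t) * f t) ^ 2
      ≤ ∫ t : ℝ, (Real.exp (theta * t) * w t) ^ 2 := by
  set E : ℝ → ℝ := fun t => Real.exp (theta * t) with hE
  have hcd : ContDiff ℝ ((1 : WithTop ℕ∞) + 1) f := by
    have : ((1 : WithTop ℕ∞) + 1) = 2 := by norm_num
    rwa [this]
  obtain ⟨hdiff, -, hcd1⟩ := contDiff_succ_iff_deriv.mp hcd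
  obtain ⟨hdiff1, hc2⟩ := contDiff_one_iff_deriv.mp hcd1
  have hc1 : Continuous (deriv f) := hcd1.continuous
  have hc0 : Continuous f := hf.continuous
  have hd1 : ∀ t, HasDerivAt f (deriv f t) t := fun t => (hdiff t).hasDerivAt
  have hd2 : ∀ t, HasDerivAt (deriv f) (deriv (deriv f) t) t := fun t => (hdiff1 t).hasDerivAt
  have hcE : Continuous E := Real.continuous_exp.comp (continuous_const.mul continuous_id)
  have hdE : ∀ t, HasDerivAt E (theta * E t) t := by
    intro t
    have := ((hasDerivAt_id t).const_mul theta).exp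
    exact this.congr_deriv (by simp [hE]; ring)
  -- the three weighted functions
  set v : ℝ → ℝ := fun t => E t * f t with hv
  set v1 : ℝ → ℝ := fun t => E t * (theta * f t + deriv f t) with hv1
  set v2 : ℝ → ℝ := fun t => E t * (theta ^ 2 * f t + 2 * theta * deriv f t
    + deriv (deriv f) t) with hv2
  have hdv : ∀ t, HasDerivAt v (v1 t) t := by
    intro t
    exact ((hdE t).mul (hd1 t)).congr_deriv (by simp [hv1]; ring)
  have hdv1 : ∀ t, HasDerivAt v1 (v2 t) t := by
    intro t
    exact ((hdE t).mul (((hd1 t).const_mul theta).add (hd2 t))).congr_deriv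
      (by simp [hv2]; ring)
  have hcv2 : Continuous v2 :=
    hcE.mul (((continuous_const.mul hc0).add (continuous_const.mul hc1)).add hc2)
  have hvI : Integrable (fun t => v t ^ 2) := hfI
  have hv1I : Integrable (fun t => v1 t ^ 2) := by
    refine Integrable.mono'
      (g := fun t => 2 * theta ^ 2 * (E t * f t) ^ 2 + 2 * (E t * deriv f t) ^ 2)
      ((hfI.const_mul _).add (hf'I.const_mul _))
      ((hcE.mul ((continuous_const.mul hc0).add hc1)).pow 2).aestronglyMeasurable ?_
    refine Filter.Eventually.of_forall fun t => ?_
    rw [Real.norm_eq_abs, abs_of_nonneg (sq_nonneg _)]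
    simp only [hv1]
    have hrw : E t * (theta * f t + deriv f t)
        = theta * (E t * f t) + E t * deriv f t := by ring
    rw [hrw]
    calc (theta * (E t * f t) + E t * deriv f t) ^ 2
        ≤ 2 * (theta * (E t * f t)) ^ 2 + 2 * (E t * deriv f t) ^ 2 := tri2 _ _
      _ = 2 * theta ^ 2 * (E t * f t) ^ 2 + 2 * (E t * deriv f t) ^ 2 := by ring
  have hv2I : Integrable (fun t => v2 t ^ 2) := by
    refine Integrable.mono'
      (g := fun t => 3 * theta ^ 4 * (E t * f t) ^ 2
        + 12 * theta ^ 2 * (E t * deriv f t) ^ 2 + 3 * (E t * deriv (deriv f) t) ^ 2)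
      (((hfI.const_mul _).add (hf'I.const_mul _)).add (hf''I.const_mul _))
      (hcv2.pow 2).aestronglyMeasurable ?_
    refine Filter.Eventually.of_forall fun t => ?_
    rw [Real.norm_eq_abs, abs_of_nonneg (sq_nonneg _)]
    simp only [hv2]
    have hrw : E t * (theta ^ 2 * f t + 2 * theta * deriv f t + deriv (deriv f) t)
        = theta ^ 2 * (E t * f t) + 2 * theta * (E t * deriv f t)
          + E t * deriv (deriv f) t := by ring
    rw [hrw]
    calc (theta ^ 2 * (E t * f t) + 2 * theta * (E t * deriv f t)
          + E t * deriv (deriv f) t) ^ 2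
        ≤ 3 * (theta ^ 2 * (E t * f t)) ^ 2 + 3 * (2 * theta * (E t * deriv f t)) ^ 2
          + 3 * (E t * deriv (deriv f) t) ^ 2 := tri3 _ _ _
      _ = 3 * theta ^ 4 * (E t * f t) ^ 2 + 12 * theta ^ 2 * (E t * deriv f t) ^ 2
          + 3 * (E t * deriv (deriv f) t) ^ 2 := by ring
  have hkey := key_scalar heps hd haK habK hdv hdv1 hcv2 hvI hv1I hv2I
  have hfeq : (fun t : ℝ => (eps * v2 t + b * v1 t + a * v t) ^ 2)
      = fun t : ℝ => (E t * w t) ^ 2 := by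
    funext t
    have h1 := hode t
    simp only [hv, hv1, hv2, hE, ha, hb]
    rw [← h1]
    ring
  rw [hfeq] at hkey
  exact hkey

lemma lp_sq_summable (f : lp (fun _ : ℕ => ℝ) 2) : Summable fun n => (f n : ℝ) ^ 2 := by
  have h := (lp.memℓp f).summable (p := 2) (by norm_num)
  simp only [ENNReal.toReal_ofNat, Real.norm_eq_abs] at h
  have : (fun i => |f i| ^ (2 : ℝ)) = fun i => (f i : ℝ) ^ 2 := by
    funext i
    rw [show ((2:ℝ)) = ((2:ℕ):ℝ) by norm_num, Real.rpow_natCast, sq_abs]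
  rwa [this] at h

lemma lp_norm_sq (f : lp (fun _ : ℕ => ℝ) 2) : ‖f‖ ^ 2 = ∑' n, (f n : ℝ) ^ 2 := by
  have h := lp.norm_rpow_eq_tsum (p := 2) (by norm_num) f
  simp only [ENNReal.toReal_ofNat, Real.norm_eq_abs] at h
  rw [show ((2:ℝ)) = ((2:ℕ):ℝ) by norm_num, Real.rpow_natCast] at h
  rw [h]
  congr 1
  funext i
  rw [Real.rpow_natCast, sq_abs]

lemma arith1 {gp a : ℝ} (hgp : 0 ≤ gp) (h : gp / 2 ≤ a ∨ a ≤ -(gp / 2)) : gp ^ 2 / 4 ≤ a ^ 2 := by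
  rcases h with h | h <;> nlinarith

lemma arith2 {eps gp a b d : ℝ} (heps : 0 < eps) (hgp : 0 < gp)
    (hbl : eps * gp ≤ b ^ 2) (hd : 2 * eps * d = 2 * eps * a - b ^ 2)
    (hcc : b ^ 2 < 2 * eps * a) : gp ^ 2 / 4 ≤ a ^ 2 - d ^ 2 := by
  have h6 : b ^ 2 < 4 * eps * a - b ^ 2 := by linarith
  have h7 : (eps * gp) * (eps * gp) ≤ b ^ 2 * (4 * eps * a - b ^ 2) :=
    mul_le_mul hbl (hbl.trans h6.le) (by positivity) (sq_nonneg b)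
  have h8 : b ^ 2 * (4 * eps * a - b ^ 2) = (a ^ 2 - d ^ 2) * (4 * eps ^ 2) := by
    linear_combination (2 * eps * d + 2 * eps * a - b ^ 2) * hd
  nlinarith [mul_pos heps heps]


set_option maxHeartbeats 1000000 in
theorem stmt_5 (lam : ℕ → ℝ) (hmono : Monotone lam) (hpos : 0 < lam 0)
    (N : ℕ) (hgapN : lam N < lam (N + 1))
    (eps : ℝ) (heps : 0 < eps) (hgap : 1 / eps ≥ 3 * lam (N + 1) + lam N)
    (theta : ℝ) (htheta : 2 * theta * (eps * theta - 1) + lam N + lam (N + 1) = 0)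
    (u h : ℝ → lp (fun _ : ℕ => ℝ) 2)
    (hu : Integrable (fun t => Real.exp (2 * theta * t) * ‖u t‖ ^ 2))
    (hh : Integrable (fun t => Real.exp (2 * theta * t) * ‖h t‖ ^ 2))
    (hureg : ∀ n : ℕ, ContDiff ℝ 2 (fun t => (u t : ℕ → ℝ) n))
    (hu' : ∀ n : ℕ, Integrable (fun t =>
      (Real.exp (theta * t) * deriv (fun s => (u s : ℕ → ℝ) n) t) ^ 2))
    (hu'' : ∀ n : ℕ, Integrable (fun t =>
      (Real.exp (theta * t) * deriv (deriv (fun s => (u s : ℕ → ℝ) n)) t) ^ 2))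
    (heq : ∀ n : ℕ, ∀ t : ℝ,
      eps * deriv (deriv (fun s => (u s : ℕ → ℝ) n)) t
        + deriv (fun s => (u s : ℕ → ℝ) n) t
        + lam n * (u t : ℕ → ℝ) n = (h t : ℕ → ℝ) n) :
    Real.sqrt (∫ t : ℝ, Real.exp (2 * theta * t) * ‖u t‖ ^ 2)
      ≤ (2 / (lam (N + 1) - lam N)) *
        Real.sqrt (∫ t : ℝ, Real.exp (2 * theta * t) * ‖h t‖ ^ 2) := by
  have hgpp : 0 < lam (N + 1) - lam N := sub_pos.mpr hgapN
  set gp : ℝ := lam (N + 1) - lam N with hgpdef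
  set K : ℝ := gp ^ 2 / 4 with hKdef
  have hKpos : 0 < K := by positivity
  -- arithmetic consequences of the hypotheses
  have hth2 : eps * theta ^ 2 - theta = -(lam N + lam (N + 1)) / 2 := by
    linear_combination htheta / 2
  have hb2 : (1 - 2 * eps * theta) ^ 2 = 1 - 2 * eps * (lam N + lam (N + 1)) := by
    linear_combination 2 * eps * htheta
  have h1eps : (3 * lam (N + 1) + lam N) * eps ≤ 1 := (le_div_iff₀ heps).mp hgap
  have hbl : eps * gp ≤ (1 - 2 * eps * theta) ^ 2 := by
    rw [hb2, hgpdef]; nlinarith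
  -- continuity of exp weight and of components
  have hcE : Continuous (fun t : ℝ => Real.exp (theta * t)) :=
    Real.continuous_exp.comp (continuous_const.mul continuous_id)
  have hcomp : ∀ n : ℕ, Continuous (deriv (fun s => (u s : ℕ → ℝ) n))
      ∧ Continuous (deriv (deriv (fun s => (u s : ℕ → ℝ) n))) := by
    intro n
    have hcd : ContDiff ℝ ((1 : WithTop ℕ∞) + 1) (fun s => (u s : ℕ → ℝ) n) := by
      rw [show ((1 : WithTop ℕ∞) + 1) = 2 by norm_num]; exact hureg n
    obtain ⟨-, -, hcd1⟩ := contDiff_succ_iff_deriv.mp hcd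
    exact ⟨hcd1.continuous, (contDiff_one_iff_deriv.mp hcd1).2⟩
  have hch : ∀ n : ℕ, Continuous (fun t => (h t : ℕ → ℝ) n) := by
    intro n
    have hrw : (fun t => (h t : ℕ → ℝ) n)
        = fun t => eps * deriv (deriv (fun s => (u s : ℕ → ℝ) n)) t
            + deriv (fun s => (u s : ℕ → ℝ) n) t + lam n * (u t : ℕ → ℝ) n :=
      funext fun t => (heq n t).symm
    rw [hrw]
    exact ((continuous_const.mul (hcomp n).2).add (hcomp n).1).add
      (continuous_const.mul (hureg n).continuous)
  -- integrability of the weighted components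
  have hexpsq : ∀ t : ℝ, Real.exp (theta * t) ^ 2 = Real.exp (2 * theta * t) := by
    intro t
    rw [sq, ← Real.exp_add]
    congr 1; ring
  have hcompsq : ∀ (w : ℝ → lp (fun _ : ℕ => ℝ) 2)
      (_ : Integrable (fun t => Real.exp (2 * theta * t) * ‖w t‖ ^ 2))
      (n : ℕ) (_ : Continuous (fun t => (w t : ℕ → ℝ) n)),
      Integrable (fun t => (Real.exp (theta * t) * (w t : ℕ → ℝ) n) ^ 2) := by
    intro w hw n hc
    refine hw.mono' ((hcE.mul hc).pow 2).aestronglyMeasurable ?_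
    refine Filter.Eventually.of_forall fun t => ?_
    rw [Real.norm_eq_abs, abs_of_nonneg (sq_nonneg _)]
    have h1 : |(w t : ℕ → ℝ) n| ≤ ‖w t‖ := by
      simpa using lp.norm_apply_le_norm (by norm_num) (w t) n
    have h2 : ((w t : ℕ → ℝ) n) ^ 2 ≤ ‖w t‖ ^ 2 := by
      rw [← sq_abs]
      exact pow_le_pow_left₀ (abs_nonneg _) h1 2
    calc (Real.exp (theta * t) * (w t : ℕ → ℝ) n) ^ 2
        = Real.exp (theta * t) ^ 2 * ((w t : ℕ → ℝ) n) ^ 2 := by ring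
      _ ≤ Real.exp (theta * t) ^ 2 * ‖w t‖ ^ 2 :=
          mul_le_mul_of_nonneg_left h2 (sq_nonneg _)
      _ = Real.exp (2 * theta * t) * ‖w t‖ ^ 2 := by rw [hexpsq t]
  have hfI : ∀ n : ℕ, Integrable (fun t => (Real.exp (theta * t) * (u t : ℕ → ℝ) n) ^ 2) :=
    fun n => hcompsq u hu n (hureg n).continuous
  have hgI : ∀ n : ℕ, Integrable (fun t => (Real.exp (theta * t) * (h t : ℕ → ℝ) n) ^ 2) :=
    fun n => hcompsq h hh n (hch n)
  -- the per-component estimate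
  have key : ∀ n : ℕ, K * ∫ t : ℝ, (Real.exp (theta * t) * (u t : ℕ → ℝ) n) ^ 2
      ≤ ∫ t : ℝ, (Real.exp (theta * t) * (h t : ℕ → ℝ) n) ^ 2 := by
    intro n
    have haK : K ≤ (lam n + eps * theta ^ 2 - theta) ^ 2 := by
      rw [hKdef]
      refine arith1 hgpp.le ?_
      rcases le_or_gt n N with hn | hn
      · exact Or.inr (by rw [hgpdef]; linarith [hmono hn, hth2])
      · exact Or.inl (by rw [hgpdef]; linarith [hmono hn, hth2])
    have habK : (1 - 2 * eps * theta) ^ 2 < 2 * eps * (lam n + eps * theta ^ 2 - theta) →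
        K ≤ (lam n + eps * theta ^ 2 - theta) ^ 2
          - ((2 * eps * (lam n + eps * theta ^ 2 - theta) - (1 - 2 * eps * theta) ^ 2)
              / (2 * eps)) ^ 2 := by
      intro hcc
      rw [hKdef]
      exact arith2 heps hgpp hbl (by field_simp) hcc
    exact per_component heps rfl rfl
      (by field_simp) haK habK (hureg n) (hfI n) (hu' n) (hu'' n) (heq n)
  -- summation over components via ENNReal
  have hnnu : 0 ≤ᵐ[volume] fun t : ℝ => Real.exp (2 * theta * t) * ‖u t‖ ^ 2 :=
    Filter.Eventually.of_forall fun t => mul_nonneg (Real.exp_pos _).le (sq_nonneg _)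
  have hnnh : 0 ≤ᵐ[volume] fun t : ℝ => Real.exp (2 * theta * t) * ‖h t‖ ^ 2 :=
    Filter.Eventually.of_forall fun t => mul_nonneg (Real.exp_pos _).le (sq_nonneg _)
  have hpt : ∀ (w : ℝ → lp (fun _ : ℕ => ℝ) 2) (t : ℝ),
      Real.exp (2 * theta * t) * ‖w t‖ ^ 2
        = ∑' n, (Real.exp (theta * t) * (w t : ℕ → ℝ) n) ^ 2 := by
    intro w t
    rw [lp_norm_sq, ← tsum_mul_left]
    congr 1; funext n
    rw [mul_pow, hexpsq t]
  have hsummw : ∀ (w : ℝ → lp (fun _ : ℕ => ℝ) 2) (t : ℝ),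
      Summable (fun n => (Real.exp (theta * t) * (w t : ℕ → ℝ) n) ^ 2) := by
    intro w t
    refine Summable.congr ((lp_sq_summable (w t)).mul_left (Real.exp (2 * theta * t))) ?_
    intro n
    rw [mul_pow, hexpsq t]
  have hsplit : ∀ (w : ℝ → lp (fun _ : ℕ => ℝ) 2)
      (hw : Integrable (fun t => Real.exp (2 * theta * t) * ‖w t‖ ^ 2))
      (hnn : 0 ≤ᵐ[volume] fun t : ℝ => Real.exp (2 * theta * t) * ‖w t‖ ^ 2)
      (hwc : ∀ n : ℕ, Continuous (fun t => (w t : ℕ → ℝ) n))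
      (hwI : ∀ n : ℕ, Integrable (fun t => (Real.exp (theta * t) * (w t : ℕ → ℝ) n) ^ 2)),
      ENNReal.ofReal (∫ t : ℝ, Real.exp (2 * theta * t) * ‖w t‖ ^ 2)
        = ∑' n, ENNReal.ofReal (∫ t : ℝ, (Real.exp (theta * t) * (w t : ℕ → ℝ) n) ^ 2) := by
    intro w hw hnn hwc hwI
    rw [ofReal_integral_eq_lintegral_ofReal hw hnn]
    have hrw : (fun t : ℝ => ENNReal.ofReal (Real.exp (2 * theta * t) * ‖w t‖ ^ 2))
        = fun t : ℝ => ∑' n, ENNReal.ofReal ((Real.exp (theta * t) * (w t : ℕ → ℝ) n) ^ 2) := by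
      funext t
      rw [hpt w t, ENNReal.ofReal_tsum_of_nonneg (fun n => sq_nonneg _) (hsummw w t)]
    rw [hrw, lintegral_tsum fun n =>
      ((((hcE.mul (hwc n)).pow 2).measurable.ennreal_ofReal).aemeasurable :
        AEMeasurable (fun t : ℝ => ENNReal.ofReal ((Real.exp (theta * t) * (w t : ℕ → ℝ) n) ^ 2)))]
    congr 1; funext n
    rw [← ofReal_integral_eq_lintegral_ofReal (hwI n)
      (Filter.Eventually.of_forall fun t => sq_nonneg _)]
  have hAu := hsplit u hu hnnu (fun n => (hureg n).continuous) hfI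
  have hAh := hsplit h hh hnnh hch hgI
  have hIhnn : 0 ≤ ∫ t : ℝ, Real.exp (2 * theta * t) * ‖h t‖ ^ 2 :=
    integral_nonneg fun t => mul_nonneg (Real.exp_pos _).le (sq_nonneg _)
  have hmain : K * ∫ t : ℝ, Real.exp (2 * theta * t) * ‖u t‖ ^ 2
      ≤ ∫ t : ℝ, Real.exp (2 * theta * t) * ‖h t‖ ^ 2 := by
    rw [← ENNReal.ofReal_le_ofReal_iff hIhnn, ENNReal.ofReal_mul hKpos.le, hAu, hAh,
      ← ENNReal.tsum_mul_left]
    refine ENNReal.tsum_le_tsum fun n => ?_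
    rw [← ENNReal.ofReal_mul hKpos.le]
    exact ENNReal.ofReal_le_ofReal (key n)
  -- conclude with square roots
  have hIu2 : ∫ t : ℝ, Real.exp (2 * theta * t) * ‖u t‖ ^ 2
      ≤ (2 / gp) ^ 2 * ∫ t : ℝ, Real.exp (2 * theta * t) * ‖h t‖ ^ 2 := by
    have he : (2 / gp) ^ 2 * K = 1 := by
      rw [hKdef]; field_simp; norm_num
    calc ∫ t : ℝ, Real.exp (2 * theta * t) * ‖u t‖ ^ 2
        = ((2 / gp) ^ 2 * K) * ∫ t : ℝ, Real.exp (2 * theta * t) * ‖u t‖ ^ 2 := by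
          rw [he, one_mul]
      _ = (2 / gp) ^ 2 * (K * ∫ t : ℝ, Real.exp (2 * theta * t) * ‖u t‖ ^ 2) := by ring
      _ ≤ (2 / gp) ^ 2 * ∫ t : ℝ, Real.exp (2 * theta * t) * ‖h t‖ ^ 2 :=
          mul_le_mul_of_nonneg_left hmain (by positivity)
  calc Real.sqrt (∫ t : ℝ, Real.exp (2 * theta * t) * ‖u t‖ ^ 2)
      ≤ Real.sqrt ((2 / gp) ^ 2 * ∫ t : ℝ, Real.exp (2 * theta * t) * ‖h t‖ ^ 2) :=
        Real.sqrt_le_sqrt hIu2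
    _ = (2 / gp) * Real.sqrt (∫ t : ℝ, Real.exp (2 * theta * t) * ‖h t‖ ^ 2) := by
        rw [Real.sqrt_mul (sq_nonneg _), Real.sqrt_sq (by positivity)]
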